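/- The set U = {μ_7, μ_9, μ_11, ...} is an antichain with respect to permutation containment ≺. Moreover, {123, 3214, 2143, 15432} ∪ U is an antichain with respect to ≺. -/

import Mathlib

/-- A finite permutation: a length `n` together with a permutation of `{1,…,n}`
(modelled as `Fin n`). -/
def PermSeq : Type := Σ n : ℕ, Equiv.Perm (Fin n)

/-- `PermContains π ρ` : the permutation `π` is contained in `ρ` (written `π ≺ ρ`),
i.e. `ρ`, viewed as a sequence, has a subsequence order-isomorphic to `π`. -/
def PermContains {m n : ℕ} (π : Equiv.Perm (Fin m)) (ρ : Equiv.Perm (Fin n)) : Prop :=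
  ∃ f : Fin m → Fin n, StrictMono f ∧ ∀ i j : Fin m, π i < π j ↔ ρ (f i) < ρ (f j)

/-- Containment as a relation on `PermSeq`. -/
def PermLE (σ τ : PermSeq) : Prop := PermContains σ.2 τ.2

/-- A closed permutation class: downward closed under containment. -/
def IsCPC (X : Set PermSeq) : Prop := ∀ σ ∈ X, ∀ π : PermSeq, PermLE π σ → π ∈ X

/-- `countIn X n = |X ∩ S_n|`. -/
noncomputable def countIn (X : Set PermSeq) (n : ℕ) : ℕ := {π ∈ X | π.1 = n}.ncard

/-- The permutation order-isomorphic to the sequence `f` (the standardization of `f`):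
for injective `f`, it sends each position to the rank of its value. -/
noncomputable def toPerm {n : ℕ} (f : Fin n → ℕ) : Equiv.Perm (Fin n) := (Tuple.sort f)⁻¹

/-- One-line notation of the permutation `μ_{2k+5}` of Atkinson, Murphy and Ruškuc:
`2k+2, 2k+5, 2k+4`, then the interleaving `2k, 2k+3, 2k-2, 2k+1, …, 6, 9, 4, 7`,
then `1, 5, 3, 2` (e.g. `μ_7 = 4,7,6,1,5,3,2`). Positions are `0`-indexed here. -/
def muFun (k : ℕ) : Fin (2 * k + 5) → ℕ := fun i =>
  if i.val = 0 then 2 * k + 2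
  else if i.val = 1 then 2 * k + 5
  else if i.val = 2 then 2 * k + 4
  else if i.val = 2 * k + 1 then 1
  else if i.val = 2 * k + 2 then 5
  else if i.val = 2 * k + 3 then 3
  else if i.val = 2 * k + 4 then 2
  else if i.val % 2 = 1 then 2 * k - (i.val - 3)
  else 2 * k + 3 - (i.val - 4)

/-- The permutation `μ_{2k+5}`. -/
noncomputable def muPerm (k : ℕ) : Equiv.Perm (Fin (2 * k + 5)) := toPerm (muFun k)

/-- `μ_{2k+5}` as an element of `PermSeq`. -/
noncomputable def mu (k : ℕ) : PermSeq := ⟨2 * k + 5, muPerm k⟩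

/-- The infinite antichain `U = {μ_7, μ_9, μ_11, …}`. -/
noncomputable def Uset : Set PermSeq := {π | ∃ k : ℕ, 1 ≤ k ∧ π = mu k}

/-- The permutation `123`. -/
noncomputable def p123 : PermSeq := ⟨3, toPerm ![1, 2, 3]⟩

/-- The permutation `3214`. -/
noncomputable def p3214 : PermSeq := ⟨4, toPerm ![3, 2, 1, 4]⟩

/-- The permutation `2143`. -/
noncomputable def p2143 : PermSeq := ⟨4, toPerm ![2, 1, 4, 3]⟩

/-- The permutation `15432`. -/
noncomputable def p15432 : PermSeq := ⟨5, toPerm ![1, 5, 4, 3, 2]⟩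

/- ------------------------------------------------------------------ -/
/- Auxiliary development                                              -/
/- ------------------------------------------------------------------ -/

lemma toPerm_lt {n : ℕ} {f : Fin n → ℕ} (hf : Function.Injective f) (i j : Fin n) :
    toPerm f i < toPerm f j ↔ f i < f j := by
  have hsm : StrictMono (f ∘ Tuple.sort f) :=
    (Tuple.monotone_sort f).strictMono_of_injective (hf.comp (Equiv.injective _))
  have h := hsm.lt_iff_lt (a := toPerm f i) (b := toPerm f j)
  simp only [Function.comp, toPerm, Equiv.Perm.inv_def, Equiv.apply_symm_apply] at h
  exact h.symm

lemma contains_iff {m n : ℕ} (g : Fin m → ℕ) (h : Fin n → ℕ)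
    (hg : Function.Injective g) (hh : Function.Injective h) :
    PermContains (toPerm g) (toPerm h) ↔
      ∃ f : Fin m → Fin n, (∀ i j : Fin m, i < j → f i < f j) ∧
        ∀ i j : Fin m, g i < g j ↔ h (f i) < h (f j) := by
  constructor
  · rintro ⟨f, hf, hc⟩
    exact ⟨f, fun i j hij => hf hij, fun i j => by
      rw [← toPerm_lt hg i j, hc i j, toPerm_lt hh]⟩
  · rintro ⟨f, hf, hc⟩
    exact ⟨f, fun i j hij => hf i j hij, fun i j => by
      rw [toPerm_lt hg i j, hc i j, toPerm_lt hh]⟩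

lemma permContains_le {m n : ℕ} {π : Equiv.Perm (Fin m)} {ρ : Equiv.Perm (Fin n)}
    (h : PermContains π ρ) : m ≤ n := by
  obtain ⟨f, hf, -⟩ := h
  simpa using Fintype.card_le_of_injective f hf.injective

/-- Arithmetic description of the one-line notation of `μ_{2l+5}`:
`Spec l p x` holds iff the entry at (0-indexed) position `p` is `x`. -/
def Spec (l p x : ℕ) : Prop :=
  (p = 0 ∧ x = 2*l+2) ∨ (p = 1 ∧ x = 2*l+5) ∨ (p = 2 ∧ x = 2*l+4) ∨
  (3 ≤ p ∧ p ≤ 2*l ∧ p % 2 = 1 ∧ p + x = 2*l+3) ∨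
  (4 ≤ p ∧ p ≤ 2*l ∧ p % 2 = 0 ∧ p + x = 2*l+7) ∨
  (p = 2*l+1 ∧ x = 1) ∨ (p = 2*l+2 ∧ x = 5) ∨ (p = 2*l+3 ∧ x = 3) ∨ (p = 2*l+4 ∧ x = 2)

lemma muFun_spec (l : ℕ) (hl : 1 ≤ l) (i : Fin (2*l+5)) : Spec l i.val (muFun l i) := by
  have hi := i.isLt
  obtain ⟨x, hx⟩ : ∃ x, muFun l i = x := ⟨_, rfl⟩
  rw [hx]
  simp only [muFun] at hx
  unfold Spec
  split_ifs at hx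
  · exact Or.inl (by omega)
  · exact Or.inr (Or.inl (by omega))
  · exact Or.inr (Or.inr (Or.inl (by omega)))
  · exact Or.inr (Or.inr (Or.inr (Or.inr (Or.inr (Or.inl (by omega))))))
  · exact Or.inr (Or.inr (Or.inr (Or.inr (Or.inr (Or.inr (Or.inl (by omega)))))))
  · exact Or.inr (Or.inr (Or.inr (Or.inr (Or.inr (Or.inr (Or.inr (Or.inl (by omega))))))))
  · exact Or.inr (Or.inr (Or.inr (Or.inr (Or.inr (Or.inr (Or.inr (Or.inr (by omega))))))))
  · exact Or.inr (Or.inr (Or.inr (Or.inl (by omega))))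
  · exact Or.inr (Or.inr (Or.inr (Or.inr (Or.inl (by omega)))))

lemma muFun_inj (l : ℕ) (hl : 1 ≤ l) : Function.Injective (muFun l) := by
  intro i j hij
  have s1 := muFun_spec l hl i
  have s2 := muFun_spec l hl j
  apply Fin.ext
  unfold Spec at s1 s2
  omega

/-- `LP l r j` records the possible (position) pairs `r < j` that can carry an
ascent (an increasing pair of entries) in `μ_{2l+5}`. -/
def LP (l r j : ℕ) : Prop :=
  (r = 0 ∧ (j = 1 ∨ j = 2 ∨ j = 4)) ∨
  (r % 2 = 1 ∧ 3 ≤ r ∧ r + 1 ≤ 2*l ∧ (j = r+1 ∨ j = r+3)) ∨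
  (r = 2*l+1 ∧ (j = 2*l+2 ∨ j = 2*l+3 ∨ j = 2*l+4))

lemma lp_of (l r j x y : ℕ) (hl : 1 ≤ l) (hrj : r < j) (hxy : x < y)
    (hx : Spec l r x) (hy : Spec l j y) : LP l r j := by
  unfold Spec at hx hy
  unfold LP
  omega

/-- The heart of the antichain argument: there is no order-embedding of the
sequence `μ_{2k+5}` into `μ_{2l+5}` for `1 ≤ k < l`. -/
lemma core (k l : ℕ) (hk : 1 ≤ k) (hkl : k < l)
    (F GV HV : ℕ → ℕ)
    (hmono : ∀ p q, p < q → q < 2*k+5 → F p < F q)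
    (hG : ∀ p, p < 2*k+5 → Spec k p (GV p))
    (hH : ∀ p, p < 2*k+5 → Spec l (F p) (HV p))
    (hcc : ∀ p q, p < 2*k+5 → q < 2*k+5 → (GV p < GV q ↔ HV p < HV q)) : False := by
  have hl : 1 ≤ l := by omega
  have key : ∀ d, d ≤ k - 1 → F (2*(k-d)+1) = 2*(l-d)+1 ∧ F (2*(k-d)+2) = 2*(l-d)+2 := by
    intro d
    induction d with
    | zero =>
      intro _
      simp only [Nat.sub_zero]
      have g1 := hG (2*k+1) (by omega)
      have g2 := hG (2*k+2) (by omega)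
      have g3 := hG (2*k+3) (by omega)
      have g4 := hG (2*k+4) (by omega)
      have c12 : HV (2*k+1) < HV (2*k+2) :=
        (hcc _ _ (by omega) (by omega)).1 (by unfold Spec at g1 g2; omega)
      have c13 : HV (2*k+1) < HV (2*k+3) :=
        (hcc _ _ (by omega) (by omega)).1 (by unfold Spec at g1 g3; omega)
      have c14 : HV (2*k+1) < HV (2*k+4) :=
        (hcc _ _ (by omega) (by omega)).1 (by unfold Spec at g1 g4; omega)
      have h1 := hH (2*k+1) (by omega)
      have h2 := hH (2*k+2) (by omega)
      have h3 := hH (2*k+3) (by omega)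
      have h4 := hH (2*k+4) (by omega)
      have lp1 := lp_of l _ _ _ _ hl (hmono (2*k+1) (2*k+2) (by omega) (by omega)) c12 h1 h2
      have lp2 := lp_of l _ _ _ _ hl (hmono (2*k+1) (2*k+3) (by omega) (by omega)) c13 h1 h3
      have lp3 := lp_of l _ _ _ _ hl (hmono (2*k+1) (2*k+4) (by omega) (by omega)) c14 h1 h4
      have hpos : F 0 < F (2*k+1) := hmono 0 (2*k+1) (by omega) (by omega)
      have m23 : F (2*k+2) < F (2*k+3) := hmono _ _ (by omega) (by omega)
      have m34 : F (2*k+3) < F (2*k+4) := hmono _ _ (by omega) (by omega)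
      unfold LP at lp1 lp2 lp3
      omega
    | succ d ih =>
      intro hd
      obtain ⟨e1, e2⟩ := ih (by omega)
      have hkd : 2 ≤ k - d := by omega
      have hld : d + 3 ≤ l := by omega
      have gA := hG (2*(k-d)+2) (by omega)
      have gB := hG (2*(k-d)-1) (by omega)
      have cAB : HV (2*(k-d)-1) < HV (2*(k-d)+2) :=
        (hcc _ _ (by omega) (by omega)).1 (by unfold Spec at gA gB; omega)
      have hA := hH (2*(k-d)+2) (by omega)
      rw [e2] at hA
      have hB := hH (2*(k-d)-1) (by omega)
      have mB : F (2*(k-d)-1) < F (2*(k-d)) := hmono _ _ (by omega) (by omega)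
      have mB2 : F (2*(k-d)) < F (2*(k-d)+1) := hmono _ _ (by omega) (by omega)
      rw [e1] at mB2
      have hpos : F 0 < F (2*(k-d)-1) := hmono _ _ (by omega) (by omega)
      have hfirst : F (2*(k-d)-1) = 2*(l-d)-1 := by
        unfold Spec at hA hB
        omega
      constructor
      · rw [show 2*(k-(d+1))+1 = 2*(k-d)-1 by omega,
            show 2*(l-(d+1))+1 = 2*(l-d)-1 by omega]
        exact hfirst
      · rw [show 2*(k-(d+1))+2 = 2*(k-d) by omega,
            show 2*(l-(d+1))+2 = 2*(l-d) by omega]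
        omega
  obtain ⟨e3, e4⟩ := key (k-1) (le_refl _)
  rw [show 2*(k-(k-1))+1 = 3 by omega] at e3
  rw [show 2*(k-(k-1))+2 = 4 by omega] at e4
  have g0 := hG 0 (by omega)
  have g2 := hG 2 (by omega)
  have g4 := hG 4 (by omega)
  have c02 : HV 0 < HV 2 :=
    (hcc 0 2 (by omega) (by omega)).1 (by unfold Spec at g0 g2; omega)
  have c04 : HV 0 < HV 4 :=
    (hcc 0 4 (by omega) (by omega)).1 (by unfold Spec at g0 g4; omega)
  have h0 := hH 0 (by omega)
  have h2 := hH 2 (by omega)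
  have h4 := hH 4 (by omega)
  rw [e4] at h4
  have lpC := lp_of l _ _ _ _ hl (hmono 0 2 (by omega) (by omega)) c02 h0 h2
  have m01 : F 0 < F 1 := hmono 0 1 (by omega) (by omega)
  have m12 : F 1 < F 2 := hmono 1 2 (by omega) (by omega)
  have m23 : F 2 < F 3 := hmono 2 3 (by omega) (by omega)
  rw [e3] at m23
  unfold LP at lpC
  unfold Spec at h0 h4
  omega

lemma mu_not_le (k l : ℕ) (hk : 1 ≤ k) (hkl : k < l) :
    ¬ PermContains (muPerm k) (muPerm l) := by
  have hl : 1 ≤ l := by omega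
  rw [muPerm, muPerm, contains_iff _ _ (muFun_inj k hk) (muFun_inj l hl)]
  rintro ⟨f, hf, hc⟩
  refine core k l hk hkl
    (fun p => if hp : p < 2*k+5 then (f ⟨p, hp⟩).val else 0)
    (fun p => if hp : p < 2*k+5 then muFun k ⟨p, hp⟩ else 0)
    (fun p => if hp : p < 2*k+5 then muFun l (f ⟨p, hp⟩) else 0)
    ?_ ?_ ?_ ?_
  · intro p q hpq hq
    simp only [dif_pos (show p < 2*k+5 by omega), dif_pos hq]
    exact hf _ _ (by exact hpq)
  · intro p hp
    simp only [dif_pos hp]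
    exact muFun_spec k hk ⟨p, hp⟩
  · intro p hp
    simp only [dif_pos hp]
    exact muFun_spec l hl (f ⟨p, hp⟩)
  · intro p q hp hq
    simp only [dif_pos hp, dif_pos hq]
    exact hc ⟨p, hp⟩ ⟨q, hq⟩

/- the four small permutations avoid being patterns of each μ -/

lemma not123 (l : ℕ) (hl : 1 ≤ l) : ¬ PermContains (toPerm ![1,2,3]) (muPerm l) := by
  rw [muPerm, contains_iff _ _ (by decide) (muFun_inj l hl)]
  rintro ⟨f, hf, hc⟩
  have m01 : (f 0).val < (f 1).val := hf 0 1 (by decide)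
  have m12 : (f 1).val < (f 2).val := hf 1 2 (by decide)
  have c01 : muFun l (f 0) < muFun l (f 1) := (hc 0 1).1 (by decide)
  have c12 : muFun l (f 1) < muFun l (f 2) := (hc 1 2).1 (by decide)
  have lp1 := lp_of l _ _ _ _ hl m01 c01 (muFun_spec l hl (f 0)) (muFun_spec l hl (f 1))
  have lp2 := lp_of l _ _ _ _ hl m12 c12 (muFun_spec l hl (f 1)) (muFun_spec l hl (f 2))
  unfold LP at lp1 lp2
  omega

lemma not3214 (l : ℕ) (hl : 1 ≤ l) : ¬ PermContains (toPerm ![3,2,1,4]) (muPerm l) := by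
  rw [muPerm, contains_iff _ _ (by decide) (muFun_inj l hl)]
  rintro ⟨f, hf, hc⟩
  have m01 : (f 0).val < (f 1).val := hf 0 1 (by decide)
  have m12 : (f 1).val < (f 2).val := hf 1 2 (by decide)
  have m23 : (f 2).val < (f 3).val := hf 2 3 (by decide)
  have c03 : muFun l (f 0) < muFun l (f 3) := (hc 0 3).1 (by decide)
  have c13 : muFun l (f 1) < muFun l (f 3) := (hc 1 3).1 (by decide)
  have c23 : muFun l (f 2) < muFun l (f 3) := (hc 2 3).1 (by decide)
  have lp1 := lp_of l _ _ _ _ hl (by omega) c03 (muFun_spec l hl (f 0)) (muFun_spec l hl (f 3))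
  have lp2 := lp_of l _ _ _ _ hl (by omega) c13 (muFun_spec l hl (f 1)) (muFun_spec l hl (f 3))
  have lp3 := lp_of l _ _ _ _ hl m23 c23 (muFun_spec l hl (f 2)) (muFun_spec l hl (f 3))
  unfold LP at lp1 lp2 lp3
  omega

lemma not2143 (l : ℕ) (hl : 1 ≤ l) : ¬ PermContains (toPerm ![2,1,4,3]) (muPerm l) := by
  rw [muPerm, contains_iff _ _ (by decide) (muFun_inj l hl)]
  rintro ⟨f, hf, hc⟩
  have m01 : (f 0).val < (f 1).val := hf 0 1 (by decide)
  have m12 : (f 1).val < (f 2).val := hf 1 2 (by decide)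
  have m23 : (f 2).val < (f 3).val := hf 2 3 (by decide)
  have c02 : muFun l (f 0) < muFun l (f 2) := (hc 0 2).1 (by decide)
  have c03 : muFun l (f 0) < muFun l (f 3) := (hc 0 3).1 (by decide)
  have c12 : muFun l (f 1) < muFun l (f 2) := (hc 1 2).1 (by decide)
  have c13 : muFun l (f 1) < muFun l (f 3) := (hc 1 3).1 (by decide)
  have lp1 := lp_of l _ _ _ _ hl (by omega) c02 (muFun_spec l hl (f 0)) (muFun_spec l hl (f 2))
  have lp2 := lp_of l _ _ _ _ hl (by omega) c03 (muFun_spec l hl (f 0)) (muFun_spec l hl (f 3))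
  have lp3 := lp_of l _ _ _ _ hl m12 c12 (muFun_spec l hl (f 1)) (muFun_spec l hl (f 2))
  have lp4 := lp_of l _ _ _ _ hl (by omega) c13 (muFun_spec l hl (f 1)) (muFun_spec l hl (f 3))
  unfold LP at lp1 lp2 lp3 lp4
  omega

lemma not15432 (l : ℕ) (hl : 1 ≤ l) : ¬ PermContains (toPerm ![1,5,4,3,2]) (muPerm l) := by
  rw [muPerm, contains_iff _ _ (by decide) (muFun_inj l hl)]
  rintro ⟨f, hf, hc⟩
  have m01 : (f 0).val < (f 1).val := hf 0 1 (by decide)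
  have m12 : (f 1).val < (f 2).val := hf 1 2 (by decide)
  have m23 : (f 2).val < (f 3).val := hf 2 3 (by decide)
  have m34 : (f 3).val < (f 4).val := hf 3 4 (by decide)
  have c01 : muFun l (f 0) < muFun l (f 1) := (hc 0 1).1 (by decide)
  have c02 : muFun l (f 0) < muFun l (f 2) := (hc 0 2).1 (by decide)
  have c03 : muFun l (f 0) < muFun l (f 3) := (hc 0 3).1 (by decide)
  have c04 : muFun l (f 0) < muFun l (f 4) := (hc 0 4).1 (by decide)
  have lp1 := lp_of l _ _ _ _ hl m01 c01 (muFun_spec l hl (f 0)) (muFun_spec l hl (f 1))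
  have lp2 := lp_of l _ _ _ _ hl (by omega) c02 (muFun_spec l hl (f 0)) (muFun_spec l hl (f 2))
  have lp3 := lp_of l _ _ _ _ hl (by omega) c03 (muFun_spec l hl (f 0)) (muFun_spec l hl (f 3))
  have lp4 := lp_of l _ _ _ _ hl (by omega) c04 (muFun_spec l hl (f 0)) (muFun_spec l hl (f 4))
  unfold LP at lp1 lp2 lp3 lp4
  omega

/- mutual avoidance among the four small permutations -/

set_option maxRecDepth 100000 in
lemma ns1 : ¬ PermContains (toPerm ![1,2,3]) (toPerm ![3,2,1,4]) := by
  rw [contains_iff _ _ (by decide) (by decide)]; decide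
set_option maxRecDepth 100000 in
lemma ns2 : ¬ PermContains (toPerm ![1,2,3]) (toPerm ![2,1,4,3]) := by
  rw [contains_iff _ _ (by decide) (by decide)]; decide
set_option maxRecDepth 100000 in
lemma ns3 : ¬ PermContains (toPerm ![1,2,3]) (toPerm ![1,5,4,3,2]) := by
  rw [contains_iff _ _ (by decide) (by decide)]; decide
set_option maxRecDepth 100000 in
lemma ns4 : ¬ PermContains (toPerm ![3,2,1,4]) (toPerm ![2,1,4,3]) := by
  rw [contains_iff _ _ (by decide) (by decide)]; decide
set_option maxRecDepth 100000 in
lemma ns5 : ¬ PermContains (toPerm ![2,1,4,3]) (toPerm ![3,2,1,4]) := by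
  rw [contains_iff _ _ (by decide) (by decide)]; decide
set_option maxRecDepth 100000 in
lemma ns6 : ¬ PermContains (toPerm ![3,2,1,4]) (toPerm ![1,5,4,3,2]) := by
  rw [contains_iff _ _ (by decide) (by decide)]; decide
set_option maxRecDepth 100000 in
lemma ns7 : ¬ PermContains (toPerm ![2,1,4,3]) (toPerm ![1,5,4,3,2]) := by
  rw [contains_iff _ _ (by decide) (by decide)]; decide

lemma U_antichain : IsAntichain PermLE Uset := by
  rintro a ⟨k, hk, rfl⟩ b ⟨k', hk', rfl⟩ hne hle
  have hkk : k ≠ k' := fun h => hne (by rw [h])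
  rcases lt_or_gt_of_ne hkk with h | h
  · exact mu_not_le k k' hk h hle
  · have hsz : 2*k+5 ≤ 2*k'+5 := permContains_le hle
    omega

/-- `U = {μ_7, μ_9, μ_11, …}` is an antichain under containment, and so is
`{123, 3214, 2143, 15432} ∪ U`. -/
theorem U_is_antichain :
    IsAntichain PermLE Uset ∧
    IsAntichain PermLE (({p123, p3214, p2143, p15432} : Set PermSeq) ∪ Uset) := by
  refine ⟨U_antichain, ?_⟩
  intro a ha b hb hne hle
  simp only [Set.mem_union, Set.mem_insert_iff, Set.mem_singleton_iff] at ha hb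
  rcases ha with (rfl | rfl | rfl | rfl) | ⟨k, hk, rfl⟩ <;>
    rcases hb with (rfl | rfl | rfl | rfl) | ⟨k', hk', rfl⟩
  · exact hne rfl
  · exact ns1 hle
  · exact ns2 hle
  · exact ns3 hle
  · exact not123 k' hk' hle
  · have hsz : (4:ℕ) ≤ 3 := permContains_le hle; omega
  · exact hne rfl
  · exact ns4 hle
  · exact ns6 hle
  · exact not3214 k' hk' hle
  · have hsz : (4:ℕ) ≤ 3 := permContains_le hle; omega
  · exact ns5 hle
  · exact hne rfl
  · exact ns7 hle
  · exact not2143 k' hk' hle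
  · have hsz : (5:ℕ) ≤ 3 := permContains_le hle; omega
  · have hsz : (5:ℕ) ≤ 4 := permContains_le hle; omega
  · have hsz : (5:ℕ) ≤ 4 := permContains_le hle; omega
  · exact hne rfl
  · exact not15432 k' hk' hle
  · have hsz : 2*k+5 ≤ 3 := permContains_le hle; omega
  · have hsz : 2*k+5 ≤ 4 := permContains_le hle; omega
  · have hsz : 2*k+5 ≤ 4 := permContains_le hle; omega
  · have hsz : 2*k+5 ≤ 5 := permContains_le hle; omega
  · exact U_antichain ⟨k, hk, rfl⟩ ⟨k', hk', rfl⟩ hne hle
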